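/- Fix a finite digraph G on a finite vertex set V, a distinguished vertex L (the leader), a real number p, and let R be the unique function satisfying the redemption-premium recurrence. Then for every pair (q, v) in the domain of R, R(q, v) = p · N(q, v), where N(q, v) is the number of finite sequences (w_k, …, w_1, w_0) of vertices with k ≥ 0, w_0 = v, (w_{i+1}, w_i) an arc of G for each 0 ≤ i < k, and such that the concatenated sequence (w_k, …, w_0)||q (identifying the repeated vertex v) is a forward path or a forward cycle in G. In particular, R(q, v) is p times a count of paths in G, so each redemption premium is proportional to the number of paths in the digraph. -/

import Mathlib

/-!
A digraph on a finite vertex set `V` is given by its arc relation `A : V → V → Prop`,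
where arcs are ordered pairs of *distinct* vertices (irreflexivity hypothesis `hirr`).
A forward path is a nonempty list of pairwise-distinct vertices in which consecutive
vertices are joined by arcs; a forward cycle is such a list whose first and last
vertices coincide, all other vertices being pairwise distinct.
-/

/-- `l` is a forward path in the digraph with arc relation `A`. -/
def IsFwdPath {V : Type*} (A : V → V → Prop) (l : List V) : Prop :=
  l ≠ [] ∧ l.Nodup ∧ l.IsChain A

/-- `l` is a forward cycle in the digraph with arc relation `A`:
it has length at least 2 (`k ≥ 1`), its first and last vertices coincide,
all other vertices are pairwise distinct, and consecutive vertices are joined by arcs. -/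
def IsFwdCycle {V : Type*} (A : V → V → Prop) (l : List V) : Prop :=
  2 ≤ l.length ∧ l.head? = l.getLast? ∧ l.dropLast.Nodup ∧ l.IsChain A

instance {V : Type*} (A : V → V → Prop) [DecidableEq V] [DecidableRel A] (l : List V) :
    Decidable (IsFwdPath A l) := by unfold IsFwdPath; infer_instance

instance {V : Type*} (A : V → V → Prop) [DecidableEq V] [DecidableRel A] (l : List V) :
    Decidable (IsFwdCycle A l) := by unfold IsFwdCycle; infer_instance

/-- The domain of the redemption-premium function `R`: pairs `(q, v)` where `q` is a
forward path ending at the leader `L` and `v || q` (i.e. `v :: q`) is a forward path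
or a forward cycle. -/
def RDom {V : Type*} (A : V → V → Prop) (L : V) (q : List V) (v : V) : Prop :=
  IsFwdPath A q ∧ q.getLast? = some L ∧ (IsFwdPath A (v :: q) ∨ IsFwdCycle A (v :: q))

/-- `R` satisfies the redemption-premium recurrence on its domain:
`R(q, v) = p` if `v || q` is a forward cycle, and
`R(q, v) = p + Σ_u R(v || q, u)` if `v || q` is a forward path, the sum ranging over
vertices `u` with `(u, v)` an arc and `u || (v || q)` a forward path or forward cycle. -/
def SatisfiesRRec {V : Type*} [Fintype V] [DecidableEq V] (A : V → V → Prop)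
    [DecidableRel A] (L : V) (p : ℝ) (R : List V → V → ℝ) : Prop :=
  ∀ q v, RDom A L q v →
    (IsFwdCycle A (v :: q) → R q v = p) ∧
    (IsFwdPath A (v :: q) →
      R q v = p + ∑ u ∈ Finset.univ.filter
          (fun u => A u v ∧ (IsFwdPath A (u :: v :: q) ∨ IsFwdCycle A (u :: v :: q))),
          R (v :: q) u)

namespace RedemptionAux

variable {V : Type*} [Fintype V] [DecidableEq V] (A : V → V → Prop) [DecidableRel A]

/-- The set of "extension" lists counted by `N(q,v)`. -/
def Sset (q : List V) (v : V) : Set (List V) :=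
  {l | l ≠ [] ∧ l.getLast? = some v ∧ l.IsChain A ∧
    (IsFwdPath A (l ++ q) ∨ IsFwdCycle A (l ++ q))}

variable {A}

lemma chain'_of_pc {l : List V} (h : IsFwdPath A l ∨ IsFwdCycle A l) : l.IsChain A := by
  rcases h with ⟨-, -, h⟩ | ⟨-, -, -, h⟩ <;> exact h

lemma length_le_of_pc {l : List V} (h : IsFwdPath A l ∨ IsFwdCycle A l) :
    l.length ≤ Fintype.card V + 1 := by
  rcases h with ⟨-, nd, -⟩ | ⟨-, -, nd, -⟩
  · exact nd.length_le_card.trans (Nat.le_succ _)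
  · have := nd.length_le_card
    rw [List.length_dropLast] at this
    omega

variable (A)

lemma Sset_finite (q : List V) (v : V) : (Sset A q v).Finite := by
  apply (List.finite_length_le V (Fintype.card V + 1)).subset
  rintro l ⟨-, -, -, h⟩
  have h1 := length_le_of_pc h
  rw [List.length_append] at h1
  simp only [Set.mem_setOf_eq]
  omega

/-- `N(q,v)` as a natural number. -/
noncomputable def Nval (q : List V) (v : V) : ℕ := (Sset_finite A q v).toFinset.card

variable {A}

lemma mem_of_getLast? {l : List V} {a : V} (h : l.getLast? = some a) : a ∈ l := by
  have := List.dropLast_append_getLast? a (Option.mem_def.mpr h)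
  rw [← this]
  simp

/-- The "forced" lemma: any list counted in `N(v::q, u)` forces `u` to be in the filter. -/
lemma forced {q : List V} {v u L : V} (hL : q.getLast? = some L)
    {l : List V} (h2 : l.getLast? = some u)
    (hpc : IsFwdPath A (l ++ v :: q) ∨ IsFwdCycle A (l ++ v :: q)) :
    A u v ∧ (IsFwdPath A (u :: v :: q) ∨ IsFwdCycle A (u :: v :: q)) := by
  have hq : q ≠ [] := by intro h; rw [h] at hL; simp at hL
  obtain ⟨m, hdec⟩ : ∃ m, m ++ [u] = l :=
    ⟨l.dropLast, List.dropLast_append_getLast? u (Option.mem_def.mpr h2)⟩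
  have hsplit : l ++ v :: q = m ++ (u :: v :: q) := by rw [← hdec]; simp
  constructor
  · have hch := chain'_of_pc hpc
    exact (List.isChain_append.mp hch).2.2 u h2 v rfl
  · rcases hpc with ⟨-, nd, ch⟩ | ⟨-, hhl, nd, ch⟩
    · left
      rw [hsplit] at nd ch
      exact ⟨by simp, (List.sublist_append_right m _).nodup nd,
        (List.isChain_append.mp ch).2.1⟩
    · rw [hsplit] at hhl nd ch
      rcases m with _ | ⟨c, m'⟩
      · right
        simp only [List.nil_append] at hhl nd ch
        exact ⟨by simp, hhl, nd, ch⟩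
      · left
        have hlast : (u :: v :: q).getLast? = some L := by
          rw [show u :: v :: q = [u, v] ++ q from rfl,
            List.getLast?_append_of_ne_nil _ hq, hL]
        have hwlast : ((c :: m') ++ (u :: v :: q)).getLast? = some L := by
          rw [List.getLast?_append_of_ne_nil _ (by simp), hlast]
        have hcL : c = L := by
          rw [hwlast] at hhl
          simpa using hhl
        have hdrop : ((c :: m') ++ (u :: v :: q)).dropLast
            = (c :: m') ++ (u :: v :: q).dropLast := by
          rw [List.dropLast_append_of_ne_nil (by simp)]
        rw [hdrop] at nd
        have hs : (u :: v :: q).dropLast ++ [L] = u :: v :: q :=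
          List.dropLast_append_getLast? L (Option.mem_def.mpr hlast)
        have hLm : L ∉ (u :: v :: q).dropLast := by
          have hdisj := List.disjoint_of_nodup_append nd
          exact fun hmem => (hdisj (by simp [hcL])) hmem
        have hnodup : (u :: v :: q).Nodup := by
          rw [← hs]
          refine List.Nodup.append ((List.sublist_append_right (c :: m') _).nodup nd)
            (List.nodup_singleton L) ?_
          intro x hx hx'
          simp only [List.mem_singleton] at hx'
          exact hLm (hx' ▸ hx)
        exact ⟨by simp, hnodup, (List.isChain_append.mp ch).2.1⟩

lemma Nval_cycle {q : List V} {v L : V} (hqv : RDom A L q v)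
    (hc : IsFwdCycle A (v :: q)) : Nval A q v = 1 := by
  have hq : q ≠ [] := hqv.1.1
  have hSeq : Sset A q v = {[v]} := by
    ext l
    simp only [Set.mem_singleton_iff]
    constructor
    · rintro ⟨h1, h2, h3, h4⟩
      obtain ⟨m, hdec⟩ : ∃ m, m ++ [v] = l :=
        ⟨l.dropLast, List.dropLast_append_getLast? v (Option.mem_def.mpr h2)⟩
      rcases m with _ | ⟨c, m'⟩
      · simpa using hdec.symm
      · exfalso
        have hvlast : q.getLast? = some v := by
          have := hc.2.1
          rw [List.head?_cons, show v :: q = [v] ++ q from rfl,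
            List.getLast?_append_of_ne_nil _ hq] at this
          exact this.symm
        have hvq : v ∈ q := mem_of_getLast? hvlast
        have hsplit : l ++ q = (c :: m') ++ (v :: q) := by rw [← hdec]; simp
        rcases h4 with ⟨-, nd, -⟩ | ⟨-, hhl, nd, -⟩
        · rw [hsplit] at nd
          have := (List.sublist_append_right (c :: m') _).nodup nd
          rw [List.nodup_cons] at this
          exact this.1 hvq
        · rw [hsplit] at hhl nd
          have hwlast : ((c :: m') ++ (v :: q)).getLast? = some v := by
            rw [List.getLast?_append_of_ne_nil _ (by simp),
              show v :: q = [v] ++ q from rfl, List.getLast?_append_of_ne_nil _ hq, hvlast]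
          have hcv : c = v := by rw [hwlast] at hhl; simpa using hhl
          have hdrop : ((c :: m') ++ (v :: q)).dropLast
              = (c :: m') ++ (v :: q).dropLast := by
            rw [List.dropLast_append_of_ne_nil (by simp)]
          rw [hdrop] at nd
          have hdisj := List.disjoint_of_nodup_append nd
          have hv1 : v ∈ c :: m' := by simp [hcv]
          have hv2 : v ∈ (v :: q).dropLast := by
            have : (v :: q).dropLast = v :: q.dropLast := by
              rw [show v :: q = [v] ++ q from rfl, List.dropLast_append_of_ne_nil hq]
              rfl
            simp [this]
          exact hdisj hv1 hv2
    · rintro rfl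
      exact ⟨by simp, rfl, List.isChain_singleton v, by simpa using hqv.2.2⟩
  rw [Nval]
  have : (Sset_finite A q v).toFinset = {[v]} := by
    ext l
    rw [Set.Finite.mem_toFinset, hSeq]
    simp
  rw [this, Finset.card_singleton]

lemma Nval_path {q : List V} {v L : V} (hqv : RDom A L q v)
    (hp : IsFwdPath A (v :: q)) :
    Nval A q v = 1 + ∑ u ∈ Finset.univ.filter
      (fun u => A u v ∧ (IsFwdPath A (u :: v :: q) ∨ IsFwdCycle A (u :: v :: q))),
      Nval A (v :: q) u := by
  classical
  set flt := Finset.univ.filter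
    (fun u => A u v ∧ (IsFwdPath A (u :: v :: q) ∨ IsFwdCycle A (u :: v :: q))) with hflt
  have hq : q ≠ [] := hqv.1.1
  have hFeq : (Sset_finite A q v).toFinset
      = insert [v] (flt.biUnion fun u =>
          (Sset_finite A (v :: q) u).toFinset.image (· ++ [v])) := by
    ext l
    rw [Set.Finite.mem_toFinset, Finset.mem_insert, Finset.mem_biUnion]
    constructor
    · rintro ⟨h1, h2, h3, h4⟩
      obtain ⟨m, hdec⟩ : ∃ m, m ++ [v] = l :=
        ⟨l.dropLast, List.dropLast_append_getLast? v (Option.mem_def.mpr h2)⟩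
      rcases m with _ | ⟨c, m'⟩
      · left; simpa using hdec.symm
      · right
        set m := c :: m'
        have hm : m ≠ [] := by simp [m]
        have hsplit : l ++ q = m ++ (v :: q) := by rw [← hdec]; simp
        have hu : m.getLast? = some (m.getLast hm) := List.getLast?_eq_getLast hm
        have h4' : IsFwdPath A (m ++ v :: q) ∨ IsFwdCycle A (m ++ v :: q) := by
          rwa [hsplit] at h4
        obtain ⟨hA, hpcu⟩ := forced hqv.2.1 hu h4'
        refine ⟨m.getLast hm, ?_, ?_⟩
        · rw [hflt, Finset.mem_filter]
          exact ⟨Finset.mem_univ _, hA, hpcu⟩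
        · rw [Finset.mem_image]
          refine ⟨m, ?_, hdec⟩
          rw [Set.Finite.mem_toFinset]
          exact ⟨hm, hu, (chain'_of_pc h4').prefix ⟨v :: q, rfl⟩, h4'⟩
    · rintro (rfl | ⟨u, -, hl⟩)
      · exact ⟨by simp, rfl, List.isChain_singleton v, by simpa using Or.inl hp⟩
      · rw [Finset.mem_image] at hl
        obtain ⟨m, hm, rfl⟩ := hl
        rw [Set.Finite.mem_toFinset] at hm
        obtain ⟨hm1, hm2, hm3, hm4⟩ := hm
        have hassoc : (m ++ [v]) ++ q = m ++ (v :: q) := by simp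
        refine ⟨by simp, by simp, ?_, by rwa [hassoc]⟩
        have := chain'_of_pc hm4
        exact this.prefix ⟨q, hassoc⟩
  have hinj : Function.Injective (· ++ [v] : List V → List V) :=
    fun a b hab => List.append_cancel_right hab
  have hpd : ∀ u1 ∈ flt, ∀ u2 ∈ flt, u1 ≠ u2 →
      Disjoint ((Sset_finite A (v :: q) u1).toFinset.image (· ++ [v]))
        ((Sset_finite A (v :: q) u2).toFinset.image (· ++ [v])) := by
    intro u1 h1 u2 h2 hne
    simp only [Finset.disjoint_left, Finset.mem_image]
    rintro x ⟨a, ha, rfl⟩ ⟨b, hb, hab⟩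
    have hba : b = a := List.append_cancel_right hab
    rw [Set.Finite.mem_toFinset] at ha hb
    simp only [Sset, Set.mem_setOf_eq] at ha hb
    apply hne
    rw [hba] at hb
    rw [ha.2.1] at hb
    exact Option.some_injective _ hb.2.1
  have hnm : [v] ∉ flt.biUnion (fun u =>
      (Sset_finite A (v :: q) u).toFinset.image (· ++ [v])) := by
    simp only [Finset.mem_biUnion, Finset.mem_image, not_exists]
    rintro u ⟨hu, a, ha, hav⟩
    rw [Set.Finite.mem_toFinset] at ha
    simp only [Sset, Set.mem_setOf_eq] at ha
    apply ha.1
    have : a.length + 1 = 1 := by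
      have := congrArg List.length hav
      simpa using this
    exact List.length_eq_zero_iff.mp (by omega)
  rw [Nval, hFeq, Finset.card_insert_of_notMem hnm, Finset.card_biUnion hpd, add_comm]
  congr 1
  apply Finset.sum_congr rfl
  intro u hu
  rw [Finset.card_image_of_injective _ hinj]
  rfl

end RedemptionAux

/-- If `R` satisfies the redemption-premium recurrence, then for every
pair `(q, v)` in its domain, `R(q, v) = p · N(q, v)`, where `N(q, v)` is the number of
finite sequences `(w_k, …, w_1, w_0)` of vertices (modelled as nonempty lists
`l = [w_k, …, w_0]`) with `w_0 = v`, `(w_{i+1}, w_i)` an arc for each `0 ≤ i < k`, and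
such that the concatenation `(w_k, …, w_0) || q` (identifying the repeated vertex `v`,
i.e. the list `l ++ q`) is a forward path or a forward cycle. -/
theorem redemption_premium_eq_path_count {V : Type*} [Fintype V] [DecidableEq V]
    (A : V → V → Prop) [DecidableRel A] (hirr : ∀ u, ¬ A u u) (L : V) (p : ℝ)
    (R : List V → V → ℝ) (hR : SatisfiesRRec A L p R)
    (q : List V) (v : V) (hqv : RDom A L q v) :
    R q v = p * Nat.card {l : List V // l ≠ [] ∧ l.getLast? = some v ∧ l.IsChain A ∧
      (IsFwdPath A (l ++ q) ∨ IsFwdCycle A (l ++ q))} := by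
  have key : ∀ n (q : List V) (v : V), Fintype.card V ≤ n + q.length → RDom A L q v →
      R q v = p * RedemptionAux.Nval A q v := by
    intro n
    induction n with
    | zero =>
      intro q v hlen hqv
      rcases hqv.2.2 with hp | hc
      · exact absurd (hp.2.1.length_le_card) (by simp; omega)
      · rw [(hR q v hqv).1 hc, RedemptionAux.Nval_cycle hqv hc, Nat.cast_one, mul_one]
    | succ n ih =>
      intro q v hlen hqv
      rcases hqv.2.2 with hp | hc
      · rw [(hR q v hqv).2 hp, RedemptionAux.Nval_path hqv hp, Nat.cast_add, Nat.cast_one,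
          mul_add, mul_one, Nat.cast_sum, Finset.mul_sum]
        congr 1
        apply Finset.sum_congr rfl
        intro u hu
        rw [Finset.mem_filter] at hu
        have hq' : q ≠ [] := hqv.1.1
        have hdom : RDom A L (v :: q) u :=
          ⟨hp, by rw [show v :: q = [v] ++ q from rfl,
            List.getLast?_append_of_ne_nil _ hq']; exact hqv.2.1, hu.2.2⟩
        exact ih (v :: q) u (by simp; omega) hdom
      · rw [(hR q v hqv).1 hc, RedemptionAux.Nval_cycle hqv hc, Nat.cast_one, mul_one]
  have hbound : Fintype.card V ≤ (Fintype.card V) + q.length := by omega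
  rw [key (Fintype.card V) q v hbound hqv, RedemptionAux.Nval]
  congr 2
  have h1 : Nat.card {l : List V // l ≠ [] ∧ l.getLast? = some v ∧ l.IsChain A ∧
      (IsFwdPath A (l ++ q) ∨ IsFwdCycle A (l ++ q))} = (RedemptionAux.Sset A q v).ncard :=
    Nat.card_coe_set_eq _
  rw [h1, Set.ncard_eq_toFinset_card _ (RedemptionAux.Sset_finite A q v)]
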